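/- arXiv:0803.3196 — 2 statements merged into one kernel-verified Lean document; each statement's English description precedes it below -/
import Mathlib

section
/- For every integer q ≥ 1, the q-th power I^q of the augmentation ideal of 𝔽₂[V] equals the 𝔽₂-linear span of the fundamental classes [H] of the q-dimensional linear subspaces H ⊆ V. -/
open AddMonoidAlgebra

/-- The canonical basis element `[v]` of the group algebra `𝔽₂[V]` of the additive group `V`. -/
noncomputable def ga {V : Type*} [AddCommMonoid V] (v : V) :
    AddMonoidAlgebra (ZMod 2) V :=
  AddMonoidAlgebra.single v 1

/-- The fundamental class `[H] = ∑_{v ∈ H} [v] ∈ 𝔽₂[V]` of a linear subspace `H ⊆ V`. -/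
noncomputable def fundClass {V : Type*} [AddCommGroup V] [Module (ZMod 2) V]
    (H : Submodule (ZMod 2) V) : AddMonoidAlgebra (ZMod 2) V :=
  ∑ᶠ v ∈ (H : Set V), ga v

/-- The augmentation map `μ : 𝔽₂[V] → 𝔽₂`, sending each `[v]` to `1`. -/
noncomputable def aug (V : Type*) [AddCommMonoid V] :
    AddMonoidAlgebra (ZMod 2) V →ₐ[ZMod 2] ZMod 2 :=
  AddMonoidAlgebra.lift (ZMod 2) (ZMod 2) V 1

/-- The augmentation ideal `I ⊆ 𝔽₂[V]`, i.e. the kernel of the augmentation map. -/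
noncomputable def augIdeal (V : Type*) [AddCommMonoid V] :
    Ideal (AddMonoidAlgebra (ZMod 2) V) :=
  RingHom.ker (aug V).toRingHom

/-! ### Auxiliary lemmas -/

open Finset Submodule

section Basics

variable {V : Type*} [AddCommMonoid V]

lemma ga_mul (a b : V) : ga a * ga b = ga (a + b) := by
  simp [ga, AddMonoidAlgebra.single_mul_single]

lemma ga_zero : ga (0 : V) = 1 := (AddMonoidAlgebra.one_def).symm

lemma ga_add_self (a : V) : ga a + ga a = 0 := by
  rw [ga, ← AddMonoidAlgebra.single_add]
  have h : (1 + 1 : ZMod 2) = 0 := rfl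
  rw [h]
  exact AddMonoidAlgebra.single_zero a

lemma aug_single (v : V) (c : ZMod 2) : aug V (AddMonoidAlgebra.single v c) = c := by
  simp [aug, AddMonoidAlgebra.lift_single]

lemma aug_ga (v : V) : aug V (ga v) = 1 := aug_single v 1

lemma e_mem (v : V) : ga v + 1 ∈ augIdeal V := by
  have : aug V (ga v + 1) = 0 := by
    rw [map_add, aug_ga, map_one]
    rfl
  simpa [augIdeal, RingHom.mem_ker] using this

lemma prod_ga {ι : Type*} (s : Finset ι) (w : ι → V) :
    ∏ i ∈ s, ga (w i) = ga (∑ i ∈ s, w i) := by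
  induction s using Finset.cons_induction with
  | empty => simp [ga_zero]
  | cons a s ha ih => rw [Finset.prod_cons, Finset.sum_cons, ih, ga_mul]

end Basics

lemma zmod2_cases : ∀ c : ZMod 2, c = 0 ∨ c = 1 := by decide

lemma zmod2_add_self : ∀ c : ZMod 2, c + c = 0 := by decide

section Key

variable {V : Type*} [AddCommGroup V] [Module (ZMod 2) V]

lemma fundClass_eq_sum [Finite V] (H : Submodule (ZMod 2) V) :
    fundClass H = ∑ v ∈ (Set.toFinite (H : Set V)).toFinset, ga v := by
  rw [fundClass, ← finsum_mem_coe_finset, Set.Finite.coe_toFinset]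

lemma prod_eq_sum_lc (q : ℕ) (w : Fin q → V) :
    ∏ i, (ga (w i) + 1) =
      ∑ x : Fin q → ZMod 2, ga (Fintype.linearCombination (ZMod 2) w x) := by
  classical
  rw [Finset.prod_add]
  simp only [Finset.prod_const_one, mul_one, prod_ga, Finset.powerset_univ]
  refine Finset.sum_nbij' (fun t => fun j => if j ∈ t then (1 : ZMod 2) else 0)
    (fun x => univ.filter (fun j => x j = 1)) (fun t _ => Finset.mem_univ _)
    (fun x _ => Finset.mem_univ _) ?_ ?_ ?_
  · intro t _
    ext j
    simp
  · intro x _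
    funext j
    rcases zmod2_cases (x j) with h | h <;> simp [h]
  · intro t _
    congr 1
    rw [Fintype.linearCombination_apply]
    simp only [ite_smul, one_smul, zero_smul]
    rw [Finset.sum_ite_mem, Finset.univ_inter]

lemma key_indep [Finite V] (q : ℕ) (w : Fin q → V) (hw : LinearIndependent (ZMod 2) w) :
    ∏ i, (ga (w i) + 1) = fundClass (span (ZMod 2) (Set.range w)) := by
  classical
  rw [prod_eq_sum_lc]
  set F := Fintype.linearCombination (ZMod 2) w with hFdef
  have hinj : Function.Injective F := by
    rw [← LinearMap.ker_eq_bot, LinearMap.ker_eq_bot']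
    intro x hx
    funext i
    exact Fintype.linearIndependent_iff.mp hw x
      (by simpa [hFdef, Fintype.linearCombination_apply] using hx) i
  rw [fundClass_eq_sum, ← Finset.sum_image (f := ga) (g := fun x => F x) (s := univ)
    (fun x _ y _ h => hinj h)]
  congr 1
  ext v
  simp only [Set.Finite.mem_toFinset, SetLike.mem_coe, Finset.mem_image, Finset.mem_univ,
    true_and]
  rw [show (span (ZMod 2) (Set.range w)) = LinearMap.range F from
    (Fintype.range_linearCombination _ _).symm, LinearMap.mem_range]

lemma key_dep (q : ℕ) (w : Fin q → V) (hw : ¬ LinearIndependent (ZMod 2) w) :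
    ∏ i, (ga (w i) + 1) = 0 := by
  classical
  rw [prod_eq_sum_lc]
  set F := Fintype.linearCombination (ZMod 2) w with hFdef
  obtain ⟨g, hg0, i, hgi⟩ := Fintype.not_linearIndependent_iff.mp hw
  have hz : F g = 0 := by simpa [hFdef, Fintype.linearCombination_apply] using hg0
  have hgne : g ≠ 0 := fun h => hgi (by simp [h])
  refine Finset.sum_ninvolution (fun x => x + g) ?_ ?_ (fun x => Finset.mem_univ _) ?_
  · intro x
    rw [map_add, hz, add_zero, ga_add_self]
  · intro x _
    simpa using fun h => hgne h
  · intro x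
    funext j
    simp [add_assoc, zmod2_add_self]

end Key

/-- The set of `q`-fold products of elements `[v] + 1`. -/
def P (V : Type*) [AddCommMonoid V] (q : ℕ) : Set (AddMonoidAlgebra (ZMod 2) V) :=
  Set.range (fun w : Fin q → V => ∏ i, (ga (w i) + 1))

section Induction

variable {V : Type*} [AddCommMonoid V]

lemma eq_sum_of_mem_augIdeal (x : AddMonoidAlgebra (ZMod 2) V) (hx : x ∈ augIdeal V) :
    x = ∑ v ∈ x.coeff.support, x.coeff v • (ga v + 1) := by
  classical
  have hsum : ∑ v ∈ x.coeff.support, x.coeff v • ga v = x := by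
    conv_rhs => rw [← AddMonoidAlgebra.sum_coeff_single x]
    rw [Finsupp.sum]
    refine Finset.sum_congr rfl fun v _ => ?_
    rw [ga, AddMonoidAlgebra.smul_single', mul_one]
  have haug : ∑ v ∈ x.coeff.support, x.coeff v = 0 := by
    have h0 : aug V x = 0 := by
      simpa [augIdeal, RingHom.mem_ker] using hx
    calc ∑ v ∈ x.coeff.support, x.coeff v = aug V (∑ v ∈ x.coeff.support, x.coeff v • ga v) := by
          rw [map_sum]
          exact Finset.sum_congr rfl fun v _ => by
            rw [map_smul, aug_ga, smul_eq_mul, mul_one]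
      _ = 0 := by rw [hsum, h0]
  calc x = ∑ v ∈ x.coeff.support, x.coeff v • ga v
        + (∑ v ∈ x.coeff.support, x.coeff v) • (1 : AddMonoidAlgebra (ZMod 2) V) := by
        rw [hsum, haug, zero_smul, add_zero]
    _ = ∑ v ∈ x.coeff.support, x.coeff v • (ga v + 1) := by
        rw [Finset.sum_smul, ← Finset.sum_add_distrib]
        exact Finset.sum_congr rfl fun v _ => (smul_add _ _ _).symm

lemma mem_span_P_one (x : AddMonoidAlgebra (ZMod 2) V) (hx : x ∈ augIdeal V) :
    x ∈ span (ZMod 2) (P V 1) := by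
  rw [eq_sum_of_mem_augIdeal x hx]
  refine sum_mem fun v _ => smul_mem _ _ (subset_span ⟨fun _ => v, ?_⟩)
  simp

lemma pow_le_span_P (q : ℕ) (hq : 1 ≤ q) (x : AddMonoidAlgebra (ZMod 2) V)
    (hx : x ∈ augIdeal V ^ q) : x ∈ span (ZMod 2) (P V q) := by
  induction q, hq using Nat.le_induction generalizing x with
  | base =>
    rw [pow_one] at hx
    exact mem_span_P_one x hx
  | succ q hq ih =>
    rw [pow_succ] at hx
    refine Submodule.mul_induction_on hx (fun m hm n hn => ?_) (fun a b ha hb => add_mem ha hb)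
    have h1 : m ∈ span (ZMod 2) (P V q) := ih m hm
    have h2 : n ∈ span (ZMod 2) (P V 1) := mem_span_P_one n hn
    have h3 := Submodule.mul_mem_mul h1 h2
    rw [Submodule.span_mul_span] at h3
    refine span_mono (Set.mul_subset_iff.mpr ?_) h3
    rintro a ⟨w, rfl⟩ b ⟨u, rfl⟩
    refine ⟨Fin.snoc w (u 0), ?_⟩
    beta_reduce
    rw [Fin.prod_univ_castSucc]
    simp [Fin.snoc_castSucc, Fin.snoc_last, Fin.prod_univ_one]

end Induction

lemma prod_mem_pow {R : Type*} [CommRing R] {ι : Type*} (s : Finset ι) (f : ι → R)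
    (I : Ideal R) (h : ∀ i ∈ s, f i ∈ I) : ∏ i ∈ s, f i ∈ I ^ s.card := by
  classical
  induction s using Finset.cons_induction with
  | empty => simp [Ideal.one_eq_top]
  | cons a s ha ih =>
    rw [Finset.prod_cons, Finset.card_cons, pow_succ']
    exact Ideal.mul_mem_mul (h a (Finset.mem_cons_self a s))
      (ih fun i hi => h i (Finset.mem_cons_of_mem hi))

/-- for every `q ≥ 1`, the `q`-th power `I^q` of the augmentation ideal of
`𝔽₂[V]` equals the `𝔽₂`-linear span of the fundamental classes `[H]` of the
`q`-dimensional linear subspaces `H ⊆ V`. -/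
theorem augIdeal_pow_eq_span_fundClass {V : Type*} [AddCommGroup V] [Module (ZMod 2) V]
    [Module.Finite (ZMod 2) V] (q : ℕ) (hq : 1 ≤ q) :
    Submodule.restrictScalars (ZMod 2) (augIdeal V ^ q) =
      Submodule.span (ZMod 2)
        {x : AddMonoidAlgebra (ZMod 2) V |
          ∃ H : Submodule (ZMod 2) V, Module.finrank (ZMod 2) H = q ∧ x = fundClass H} := by
  classical
  haveI : Finite V := Module.finite_of_finite (ZMod 2)
  apply le_antisymm
  · intro x hx
    rw [Submodule.restrictScalars_mem] at hx
    refine span_le.mpr ?_ (pow_le_span_P q hq x hx)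
    rintro p ⟨w, rfl⟩
    by_cases hw : LinearIndependent (ZMod 2) w
    · show ∏ i, (ga (w i) + 1) ∈ _
      rw [key_indep q w hw]
      exact subset_span ⟨_, by rw [finrank_span_eq_card hw, Fintype.card_fin], rfl⟩
    · show ∏ i, (ga (w i) + 1) ∈ _
      rw [key_dep q w hw]
      exact zero_mem _
  · rw [span_le]
    rintro x ⟨H, hH, rfl⟩
    simp only [SetLike.mem_coe, Submodule.restrictScalars_mem]
    let b : Module.Basis (Fin q) (ZMod 2) H := Module.finBasisOfFinrankEq (ZMod 2) H hH
    set w : Fin q → V := fun i => (b i : V) with hwdef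
    have hw : LinearIndependent (ZMod 2) w :=
      b.linearIndependent.map' H.subtype (ker_subtype H)
    have hspan : span (ZMod 2) (Set.range w) = H := by
      have hr : Set.range w = H.subtype '' Set.range b := by
        rw [← Set.range_comp]; rfl
      rw [hr, span_image, b.span_eq, Submodule.map_top, range_subtype]
    have hkey := key_indep q w hw
    rw [hspan] at hkey
    rw [← hkey]
    have hcard : (univ : Finset (Fin q)).card = q := by simp
    have := prod_mem_pow univ (fun i => ga (w i) + 1) (augIdeal V) (fun i _ => e_mem (w i))
    rwa [hcard] at this
end

section
/- For each integer q ≥ 0 there is a unique 𝔽₂-linear map ψ_q : ⋀^q V → I^q/I^{q+1} sending each decomposable element v₁ ∧ ⋯ ∧ v_q to the residue class of the product ([0]+[v₁])·([0]+[v₂])⋯([0]+[v_q]) modulo I^{q+1}, and this map ψ_q is an isomorphism of 𝔽₂-vector spaces. -/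
open AddMonoidAlgebra

/-- The `𝔽₂`-linear map `⋀^q V → ⋀^q W` functorially induced on `q`-th exterior powers
by a linear map `f : V → W`. -/
noncomputable def extMap {R : Type*} [CommRing R] {M N : Type*} [AddCommGroup M] [Module R M]
    [AddCommGroup N] [Module R N] (q : ℕ) (f : M →ₗ[R] N) :
    ⋀[R]^q M →ₗ[R] ⋀[R]^q N :=
  (ExteriorAlgebra.map f).toLinearMap.restrict (p := ⋀[R]^q M) (q := ⋀[R]^q N)
    (fun x hx => by
      have h : Submodule.map (ExteriorAlgebra.map f).toLinearMap (⋀[R]^q M) ≤ ⋀[R]^q N := by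
        rw [ExteriorAlgebra.exteriorPower, Submodule.map_pow, ExteriorAlgebra.ι_range_map_map]
        exact pow_le_pow_left' (LinearMap.map_le_range) q
      exact h ⟨x, hx, rfl⟩)

namespace PsiAux

set_option linter.unusedSectionVars false

variable {V : Type*} [AddCommGroup V] [Module (ZMod 2) V]

noncomputable def xv (v : V) : AddMonoidAlgebra (ZMod 2) V := ga 0 + ga v

lemma ga_mul (a b : V) : ga a * ga b = ga (a + b) := by
  simp [ga, AddMonoidAlgebra.single_mul_single]

lemma ga_zero : ga (0 : V) = 1 := rfl

lemma aug_ga (v : V) : aug V (ga v) = 1 := by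
  simp [aug, ga, AddMonoidAlgebra.lift_single]

lemma addself (x : AddMonoidAlgebra (ZMod 2) V) : x + x = 0 := by
  have : (2 : ZMod 2) • x = x + x := two_smul _ x
  rw [← this, show (2 : ZMod 2) = 0 from rfl, zero_smul]

lemma vaddself (v : V) : v + v = 0 := by
  have : (2 : ZMod 2) • v = v + v := two_smul _ v
  rw [← this, show (2 : ZMod 2) = 0 from rfl, zero_smul]

lemma xv_mem (v : V) : xv v ∈ augIdeal V := by
  simp only [augIdeal, RingHom.mem_ker, xv]
  show aug V (ga 0 + ga v) = 0
  rw [map_add, aug_ga, aug_ga]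
  decide

lemma xv_zero : xv (0 : V) = 0 := addself _

lemma xv_sq (v : V) : xv v * xv v = 0 := by
  simp only [xv, add_mul, mul_add, ga_mul, add_zero, zero_add, vaddself]
  rw [show ga (0:V) + ga v + (ga v + ga (0:V)) = (ga (0:V) + ga (0:V)) + (ga v + ga v) by ring]
  rw [addself, addself, add_zero]

lemma xv_add (a b : V) : xv (a + b) = xv a + xv b + xv a * xv b := by
  simp only [xv, add_mul, mul_add, ga_mul, add_zero, zero_add]
  rw [show ga (0:V) + ga a + (ga (0:V) + ga b) + (ga (0:V) + ga a + (ga b + ga (a+b)))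
    = (ga (0:V) + (ga (0:V) + ga (0:V))) + (ga a + ga a) + (ga b + ga b) + ga (a+b) by ring]
  rw [addself, addself, addself, add_zero, add_zero, add_zero]

end PsiAux

namespace PsiAux
set_option linter.unusedSectionVars false

variable {V : Type*} [AddCommGroup V] [Module (ZMod 2) V]



lemma prod_mem_pow {ι : Type*} (s : Finset ι) (f : ι → AddMonoidAlgebra (ZMod 2) V)
    (h : ∀ i ∈ s, f i ∈ augIdeal V) : ∏ i ∈ s, f i ∈ augIdeal V ^ s.card := by
  classical
  induction s using Finset.induction_on with
  | empty => simp
  | @insert a s ha ih =>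
    rw [Finset.prod_insert ha, Finset.card_insert_of_notMem ha, pow_succ']
    exact Submodule.mul_mem_mul (h a (Finset.mem_insert_self a s))
      (ih fun i hi => h i (Finset.mem_insert_of_mem hi))

variable (q : ℕ)

/-- the quotient `𝔽₂[V]/I^{q+1}` -/
abbrev Quot (q : ℕ) := AddMonoidAlgebra (ZMod 2) V ⧸
  Submodule.restrictScalars (ZMod 2) (augIdeal V ^ (q + 1))

noncomputable def psiAlt : V [⋀^Fin q]→ₗ[ZMod 2] Quot (V := V) q where
  toFun v := Submodule.Quotient.mk (∏ i, xv (v i))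
  map_update_add' := by
    intro _ v j a b
    classical
    have key : ∀ c : V, ∏ i, xv (Function.update v j c i)
        = xv c * ∏ i ∈ Finset.univ \ {j}, xv (v i) := by
      intro c
      rw [← Finset.prod_update_of_mem (Finset.mem_univ j)]
      exact Finset.prod_congr rfl fun i _ => by
        rcases eq_or_ne i j with rfl | hij
        · simp
        · simp [Function.update_of_ne hij]
    simp only [key]
    set P := ∏ i ∈ Finset.univ \ {j}, xv (v i) with hPdef
    have hq : 1 ≤ q := Nat.one_le_iff_ne_zero.2 (by rintro rfl; exact j.elim0)
    have hcard : (Finset.univ \ {j} : Finset (Fin q)).card = q - 1 := by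
      rw [Finset.card_sdiff_of_subset (Finset.subset_univ _)]; simp
    have hP : P ∈ augIdeal V ^ (q - 1) := by
      rw [← hcard]; exact prod_mem_pow _ _ fun i _ => xv_mem _
    have hmem : xv a * xv b * P ∈ augIdeal V ^ (q + 1) := by
      rw [show q + 1 = 1 + 1 + (q - 1) by omega, pow_add, pow_add, pow_one]
      exact Submodule.mul_mem_mul (Submodule.mul_mem_mul (xv_mem a) (xv_mem b)) hP
    rw [xv_add, add_mul, add_mul, Submodule.Quotient.mk_add, Submodule.Quotient.mk_add]
    have h0 : (Submodule.Quotient.mk (xv a * xv b * P) : Quot (V := V) q) = 0 :=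
      (Submodule.Quotient.mk_eq_zero _).2 (by simpa using hmem)
    rw [h0, add_zero]
  map_update_smul' := by
    intro _ v j c x
    have hc : c = 0 ∨ c = 1 := by revert c; decide
    rcases hc with rfl | rfl
    · rw [zero_smul, zero_smul]
      have : ∏ i, xv (Function.update v j (0 : V) i) = 0 :=
        Finset.prod_eq_zero (Finset.mem_univ j) (by rw [Function.update_self, xv_zero])
      show (Submodule.Quotient.mk (∏ i, xv (Function.update v j (0 : V) i)) :
        Quot (V := V) q) = 0
      rw [this, Submodule.Quotient.mk_zero]
    · rw [one_smul, one_smul]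
  map_eq_zero_of_eq' := by
    intro v i j hij hne
    classical
    have hjmem : j ∈ Finset.univ \ {i} := by simp [Ne.symm hne]
    have : ∏ k, xv (v k) = 0 := by
      rw [Finset.prod_eq_mul_prod_sdiff_singleton_of_mem (Finset.mem_univ i) (fun k => xv (v k)),
        Finset.prod_eq_mul_prod_sdiff_singleton_of_mem hjmem (fun k => xv (v k)),
        ← mul_assoc, hij, xv_sq, zero_mul]
    show (Submodule.Quotient.mk (∏ k, xv (v k)) : Quot (V := V) q) = 0
    rw [this, Submodule.Quotient.mk_zero]

noncomputable def psiQ : (⋀[ZMod 2]^q V) →ₗ[ZMod 2] Quot (V := V) q :=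
  (ExteriorAlgebra.liftAlternating
    (Function.update (fun i => (0 : V [⋀^Fin i]→ₗ[ZMod 2] Quot (V := V) q)) q (psiAlt q))).comp
    (Submodule.subtype _)

lemma psiQ_spec (v : Fin q → V) :
    psiQ q ⟨ExteriorAlgebra.ιMulti (ZMod 2) q v,
        ExteriorAlgebra.ιMulti_range (ZMod 2) q (Set.mem_range_self v)⟩ =
      Submodule.Quotient.mk (∏ i, xv (v i)) := by
  show ExteriorAlgebra.liftAlternating _ (ExteriorAlgebra.ιMulti (ZMod 2) q v) = _
  rw [ExteriorAlgebra.liftAlternating_apply_ιMulti, Function.update_self]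
  rfl

lemma psi_ext {Q' : Type*} [AddCommGroup Q'] [Module (ZMod 2) Q']
    (f g : (⋀[ZMod 2]^q V) →ₗ[ZMod 2] Q')
    (h : ∀ v : Fin q → V,
      f ⟨ExteriorAlgebra.ιMulti (ZMod 2) q v,
          ExteriorAlgebra.ιMulti_range (ZMod 2) q (Set.mem_range_self v)⟩ =
      g ⟨ExteriorAlgebra.ιMulti (ZMod 2) q v,
          ExteriorAlgebra.ιMulti_range (ZMod 2) q (Set.mem_range_self v)⟩) : f = g := by
  apply LinearMap.ext; rintro ⟨x, hx⟩
  have hx' : x ∈ Submodule.span (ZMod 2)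
      (Set.range (ExteriorAlgebra.ιMulti (ZMod 2) q (M := V))) := by
    rwa [ExteriorAlgebra.ιMulti_span_fixedDegree]
  revert hx
  refine Submodule.span_induction
    (p := fun y _ => ∀ hy : y ∈ ⋀[ZMod 2]^q V, f ⟨y, hy⟩ = g ⟨y, hy⟩) ?_ ?_ ?_ ?_ hx'
  · rintro _ ⟨v, rfl⟩ hy
    exact h v
  · intro hy
    have : (⟨0, hy⟩ : ⋀[ZMod 2]^q V) = 0 := rfl
    rw [this, map_zero, map_zero]
  · intro y z hys hzs hy hz hyz
    have hy' : y ∈ ⋀[ZMod 2]^q V := by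
      rw [← ExteriorAlgebra.ιMulti_span_fixedDegree]; exact hys
    have hz' : z ∈ ⋀[ZMod 2]^q V := by
      rw [← ExteriorAlgebra.ιMulti_span_fixedDegree]; exact hzs
    have : (⟨y + z, hyz⟩ : ⋀[ZMod 2]^q V) = ⟨y, hy'⟩ + ⟨z, hz'⟩ := rfl
    rw [this, map_add, map_add, hy hy', hz hz']
  · intro c y hys hy hcy
    have hy' : y ∈ ⋀[ZMod 2]^q V := by
      rw [← ExteriorAlgebra.ιMulti_span_fixedDegree]; exact hys
    have : (⟨c • y, hcy⟩ : ⋀[ZMod 2]^q V) = c • ⟨y, hy'⟩ := rfl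
    rw [this, map_smul, map_smul, hy hy']

lemma psi_range {Q' : Type*} [AddCommGroup Q'] [Module (ZMod 2) Q']
    (f : (⋀[ZMod 2]^q V) →ₗ[ZMod 2] Q') (F : (Fin q → V) → Q')
    (h : ∀ v : Fin q → V,
      f ⟨ExteriorAlgebra.ιMulti (ZMod 2) q v,
          ExteriorAlgebra.ιMulti_range (ZMod 2) q (Set.mem_range_self v)⟩ = F v) :
    LinearMap.range f = Submodule.span (ZMod 2) (Set.range F) := by
  apply le_antisymm
  · rintro _ ⟨⟨x, hx⟩, rfl⟩
    have hx' : x ∈ Submodule.span (ZMod 2)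
        (Set.range (ExteriorAlgebra.ιMulti (ZMod 2) q (M := V))) := by
      rwa [ExteriorAlgebra.ιMulti_span_fixedDegree]
    revert hx
    refine Submodule.span_induction
      (p := fun y _ => ∀ hy : y ∈ ⋀[ZMod 2]^q V,
        f ⟨y, hy⟩ ∈ Submodule.span (ZMod 2) (Set.range F)) ?_ ?_ ?_ ?_ hx'
    · rintro _ ⟨v, rfl⟩ hy
      rw [show (⟨_, hy⟩ : ⋀[ZMod 2]^q V) =
        ⟨ExteriorAlgebra.ιMulti (ZMod 2) q v,
          ExteriorAlgebra.ιMulti_range (ZMod 2) q (Set.mem_range_self v)⟩ from rfl, h v]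
      exact Submodule.subset_span (Set.mem_range_self v)
    · intro hy
      rw [show (⟨0, hy⟩ : ⋀[ZMod 2]^q V) = 0 from rfl, map_zero]
      exact Submodule.zero_mem _
    · intro y z hys hzs hy hz hyz
      have hy' : y ∈ ⋀[ZMod 2]^q V := by
        rw [← ExteriorAlgebra.ιMulti_span_fixedDegree]; exact hys
      have hz' : z ∈ ⋀[ZMod 2]^q V := by
        rw [← ExteriorAlgebra.ιMulti_span_fixedDegree]; exact hzs
      rw [show (⟨y + z, hyz⟩ : ⋀[ZMod 2]^q V) = ⟨y, hy'⟩ + ⟨z, hz'⟩ from rfl, map_add]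
      exact Submodule.add_mem _ (hy hy') (hz hz')
    · intro c y hys hy hcy
      have hy' : y ∈ ⋀[ZMod 2]^q V := by
        rw [← ExteriorAlgebra.ιMulti_span_fixedDegree]; exact hys
      rw [show (⟨c • y, hcy⟩ : ⋀[ZMod 2]^q V) = c • ⟨y, hy'⟩ from rfl, map_smul]
      exact Submodule.smul_mem _ c (hy hy')
  · rw [Submodule.span_le]
    rintro _ ⟨v, rfl⟩
    exact ⟨_, h v⟩

end PsiAux

namespace PsiAux
set_option linter.unusedSectionVars false

variable {V : Type*} [AddCommGroup V] [Module (ZMod 2) V]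



lemma ga_zero' : ga (0 : V) = 1 := rfl

variable {n : ℕ} (e : Module.Basis (Fin n) (ZMod 2) V)

/-- sum of basis vectors over a finite set -/
noncomputable def vS (S : Finset (Fin n)) : V := ∑ i ∈ S, e i

/-- products of `xv` of basis vectors -/
noncomputable def yS (S : Finset (Fin n)) : AddMonoidAlgebra (ZMod 2) V :=
  ∏ i ∈ S, xv (e i)

lemma prod_ga {ι : Type*} (s : Finset ι) (f : ι → V) :
    ∏ i ∈ s, ga (f i) = ga (∑ i ∈ s, f i) := by
  classical
  induction s using Finset.induction_on with
  | empty => simp [ga_zero']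
  | @insert a s ha ih => rw [Finset.prod_insert ha, Finset.sum_insert ha, ih, ga_mul]

lemma yS_eq (S : Finset (Fin n)) : yS e S = ∑ T ∈ S.powerset, ga (vS e T) := by
  classical
  unfold yS
  have : ∀ i ∈ S, xv (e i) = ga (e i) + ga 0 := fun i _ => by rw [xv, add_comm]
  rw [Finset.prod_congr rfl this, Finset.prod_add]
  refine Finset.sum_congr rfl fun T hT => ?_
  rw [prod_ga, ga_zero', Finset.prod_const_one, mul_one]
  rfl

lemma repr_vS (S : Finset (Fin n)) (j : Fin n) :
    e.repr (vS e S) j = if j ∈ S then 1 else 0 := by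
  classical
  rw [vS, map_sum]
  rw [show (∑ i ∈ S, e.repr (e i)) j = ∑ i ∈ S, (e.repr (e i)) j from
    Finsupp.finset_sum_apply S _ j]
  rw [Finset.sum_congr rfl fun i _ => by rw [e.repr_self, Finsupp.single_apply]]
  exact Finset.sum_ite_eq' S j fun _ => 1

lemma vS_injective : Function.Injective (vS e) := by
  intro S T h
  ext j
  have := congrArg (fun v => e.repr v j) h
  simp only [repr_vS] at this
  by_contra hc
  rcases Classical.em (j ∈ S) with hS | hS <;> rcases Classical.em (j ∈ T) with hT | hT <;>
    simp [hS, hT] at this hc <;> tauto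

lemma vS_surjective : Function.Surjective (vS e) := by
  intro v
  refine ⟨(e.repr v).support, ?_⟩
  have h1 : ∀ i ∈ (e.repr v).support, e i = e.repr v i • e i := by
    intro i hi
    have : e.repr v i ≠ 0 := Finsupp.mem_support_iff.1 hi
    have h2 : e.repr v i = 1 := by
      revert this; generalize e.repr v i = c; revert c; decide
    rw [h2, one_smul]
  rw [vS, Finset.sum_congr rfl h1]
  have h3 : ∑ i ∈ (e.repr v).support, e.repr v i • e i = ∑ i : Fin n, e.repr v i • e i :=
    Finset.sum_subset (Finset.subset_univ _) (fun i _ hi => by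
      rw [Finsupp.notMem_support_iff.1 hi, zero_smul])
  rw [h3, e.sum_repr]

end PsiAux

namespace PsiAux
set_option linter.unusedSectionVars false
variable {V : Type*} [AddCommGroup V] [Module (ZMod 2) V] {n : ℕ} (e : Module.Basis (Fin n) (ZMod 2) V)

/-- basis of the group algebra given by `ga` of sums of basis vectors -/
noncomputable def gaB : Module.Basis (Finset (Fin n)) (ZMod 2) (AddMonoidAlgebra (ZMod 2) V) :=
  (AddMonoidAlgebra.basis V (ZMod 2)).reindex
    (Equiv.ofBijective (vS e) ⟨vS_injective e, vS_surjective e⟩).symm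

lemma gaB_apply (S : Finset (Fin n)) : gaB e S = ga (vS e S) := by
  show ((AddMonoidAlgebra.basis V (ZMod 2)).reindex
      (Equiv.ofBijective (vS e) ⟨vS_injective e, vS_surjective e⟩).symm :
      Module.Basis (Finset (Fin n)) (ZMod 2) (AddMonoidAlgebra (ZMod 2) V)) S =
        AddMonoidAlgebra.single (vS e S) 1
  rw [Module.Basis.reindex_apply, Equiv.symm_symm, AddMonoidAlgebra.basis_apply]
  rfl

lemma ga_vS_mem_span (T : Finset (Fin n)) :
    ga (vS e T) ∈ Submodule.span (ZMod 2) (Set.range (yS e)) := by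
  classical
  induction T using Finset.strongInductionOn with
  | _ T ih =>
    have h1 : yS e T = (∑ T' ∈ T.powerset \ {T}, ga (vS e T')) + ga (vS e T) := by
      rw [yS_eq, ← Finset.sum_eq_sum_sdiff_singleton_add (Finset.mem_powerset_self T)]
    have h2 : ga (vS e T) = yS e T - ∑ T' ∈ T.powerset \ {T}, ga (vS e T') := by
      rw [h1]; abel
    rw [h2]
    refine Submodule.sub_mem _ (Submodule.subset_span (Set.mem_range_self T)) ?_
    refine Submodule.sum_mem _ fun T' hT' => ?_
    have : T' ⊂ T := by
      rw [Finset.mem_sdiff, Finset.mem_powerset, Finset.mem_singleton] at hT'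
      exact lt_of_le_of_ne hT'.1 hT'.2
    exact ih T' this

lemma top_le_span_yS :
    ⊤ ≤ Submodule.span (ZMod 2) (Set.range (yS e)) := by
  rw [← (gaB e).span_eq]
  rw [Submodule.span_le]
  rintro _ ⟨S, rfl⟩
  rw [gaB_apply]
  exact ga_vS_mem_span e S

/-- the `yS` form a basis of the group algebra -/
noncomputable def yB : Module.Basis (Finset (Fin n)) (ZMod 2) (AddMonoidAlgebra (ZMod 2) V) :=
  basisOfTopLeSpanOfCardEqFinrank (yS e) (top_le_span_yS e)
    (by rw [Module.finrank_eq_card_basis (gaB e)])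

lemma yB_apply (S : Finset (Fin n)) : yB e S = yS e S := by
  simp [yB]

lemma aug_xv (v : V) : aug V (xv v) = 0 := by
  rw [xv, map_add, aug_ga, aug_ga]; decide

lemma aug_yS (S : Finset (Fin n)) : aug V (yS e S) = if S = ∅ then 1 else 0 := by
  rcases eq_or_ne S ∅ with rfl | h
  · simp [yS]
  · obtain ⟨i, hi⟩ := Finset.nonempty_iff_ne_empty.2 h
    rw [if_neg h, yS, map_prod]
    exact Finset.prod_eq_zero hi (aug_xv _)

lemma aug_eq_coord : (aug V).toLinearMap = (yB e).coord ∅ := by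
  refine (yB e).ext fun S => ?_
  rw [Module.Basis.coord_apply, Module.Basis.repr_self, yB_apply]
  show aug V (yS e S) = Finsupp.single S (1 : ZMod 2) ∅
  rw [aug_yS, Finsupp.single_apply]

lemma mem_I_le_span {a : AddMonoidAlgebra (ZMod 2) V} (ha : a ∈ augIdeal V) :
    a ∈ Submodule.span (ZMod 2) (yS e '' {S | 1 ≤ S.card}) := by
  have himg : yS e '' {S | 1 ≤ S.card} = ⇑(yB e) '' {S | 1 ≤ S.card} :=
    Set.image_congr fun S _ => (yB_apply e S).symm
  rw [himg, Module.Basis.mem_span_image]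
  intro S hS
  simp only [Finset.mem_coe, Finsupp.mem_support_iff] at hS
  simp only [Set.mem_setOf_eq, Finset.one_le_card]
  rw [Finset.nonempty_iff_ne_empty]
  rintro rfl
  apply hS
  have : (yB e).repr a ∅ = (yB e).coord ∅ a := rfl
  rw [this, ← aug_eq_coord]
  exact ha

lemma yS_mul_disjoint {S T : Finset (Fin n)} (h : Disjoint S T) :
    yS e S * yS e T = yS e (S ∪ T) :=
  (Finset.prod_union h).symm

lemma yS_mul_not_disjoint {S T : Finset (Fin n)} (h : ¬ Disjoint S T) :
    yS e S * yS e T = 0 := by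
  classical
  obtain ⟨i, hiS, hiT⟩ := Finset.not_disjoint_iff.1 h
  rw [yS, yS, Finset.prod_eq_mul_prod_sdiff_singleton_of_mem hiS (fun k => xv (e k)),
    Finset.prod_eq_mul_prod_sdiff_singleton_of_mem hiT (fun k => xv (e k)),
    mul_mul_mul_comm, xv_sq, zero_mul]

end PsiAux

namespace PsiAux
set_option linter.unusedSectionVars false
variable {V : Type*} [AddCommGroup V] [Module (ZMod 2) V] {n : ℕ} (e : Module.Basis (Fin n) (ZMod 2) V)

lemma yS_mem_pow (S : Finset (Fin n)) : yS e S ∈ augIdeal V ^ S.card :=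
  prod_mem_pow S _ fun i _ => xv_mem (e i)

lemma yS_mem_pow_le {q : ℕ} {S : Finset (Fin n)} (h : q ≤ S.card) :
    yS e S ∈ augIdeal V ^ q :=
  Ideal.pow_le_pow_right h (yS_mem_pow e S)

lemma Ipow (q : ℕ) :
    Submodule.restrictScalars (ZMod 2) (augIdeal V ^ q) =
      Submodule.span (ZMod 2) (yS e '' {S | q ≤ S.card}) := by
  apply le_antisymm
  · induction q with
    | zero =>
      intro x _
      have : yS e '' {S | 0 ≤ S.card} = Set.range (yS e) := by
        rw [show {S : Finset (Fin n) | 0 ≤ S.card} = Set.univ by ext S; simp,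
          Set.image_univ]
      rw [this]
      exact top_le_span_yS e trivial
    | succ q ih =>
      intro x hx
      rw [Submodule.restrictScalars_mem, pow_succ] at hx
      refine Submodule.mul_induction_on hx (fun m hm nn hn => ?_)
        (fun a b ha hb => Submodule.add_mem _ ha hb)
      have hm' : m ∈ Submodule.span (ZMod 2) (yS e '' {S | q ≤ S.card}) :=
        ih (by rwa [Submodule.restrictScalars_mem])
      have hn' : nn ∈ Submodule.span (ZMod 2) (yS e '' {S | 1 ≤ S.card}) :=
        mem_I_le_span e hn
      have hmul := Submodule.mul_mem_mul hm' hn'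
      rw [Submodule.span_mul_span] at hmul
      refine Submodule.span_le.2 ?_ hmul
      rintro _ ⟨_, ⟨S, hS, rfl⟩, _, ⟨T, hT, rfl⟩, rfl⟩
      show yS e S * yS e T ∈ _
      by_cases hd : Disjoint S T
      · rw [yS_mul_disjoint e hd]
        refine Submodule.subset_span ⟨S ∪ T, ?_, rfl⟩
        have : (S ∪ T).card = S.card + T.card := Finset.card_union_of_disjoint hd
        simp only [Set.mem_setOf_eq] at hS hT ⊢
        omega
      · rw [yS_mul_not_disjoint e hd]
        exact Submodule.zero_mem _
  · rw [Submodule.span_le]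
    rintro _ ⟨S, hS, rfl⟩
    rw [SetLike.mem_coe, Submodule.restrictScalars_mem]
    exact yS_mem_pow_le e hS

end PsiAux

namespace PsiAux
set_option linter.unusedSectionVars false
variable {V : Type*} [AddCommGroup V] [Module (ZMod 2) V] {n : ℕ} (e : Module.Basis (Fin n) (ZMod 2) V)

variable (q : ℕ)

/-- the submodule `I^{q+1}` (restricted scalars), i.e. what we quotient by -/
noncomputable abbrev NN (q : ℕ) : Submodule (ZMod 2) (AddMonoidAlgebra (ZMod 2) V) :=
  Submodule.restrictScalars (ZMod 2) (augIdeal V ^ (q + 1))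

lemma mk_yS_eq_zero {S : Finset (Fin n)} (h : q + 1 ≤ S.card) :
    (Submodule.Quotient.mk (yS e S) : AddMonoidAlgebra (ZMod 2) V ⧸ NN (V := V) q) = 0 :=
  (Submodule.Quotient.mk_eq_zero _).2 (by
    rw [Submodule.restrictScalars_mem]; exact yS_mem_pow_le e h)

lemma repr_yS (S : Finset (Fin n)) : (yB e).repr (yS e S) = Finsupp.single S 1 := by
  rw [← yB_apply, Module.Basis.repr_self]

lemma mkq_yS_indep : LinearIndependent (ZMod 2)
    (fun S : {S : Finset (Fin n) // S.card = q} =>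
      (Submodule.Quotient.mk (yS e S.1) : AddMonoidAlgebra (ZMod 2) V ⧸ NN (V := V) q)) := by
  classical
  rw [linearIndependent_iff']
  intro t g hsum i hi
  set z : AddMonoidAlgebra (ZMod 2) V := ∑ S ∈ t, g S • yS e S.1 with hz
  have hmkz : (Submodule.Quotient.mk z : AddMonoidAlgebra (ZMod 2) V ⧸ NN (V := V) q) = 0 := by
    rw [hz, ← Submodule.mkQ_apply, map_sum]
    simpa only [map_smul, Submodule.mkQ_apply] using hsum
  have hzN : z ∈ Submodule.span (ZMod 2) (yS e '' {S | q + 1 ≤ S.card}) := by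
    rw [← Ipow e (q + 1)]
    exact (Submodule.Quotient.mk_eq_zero _).1 hmkz
  have himg : yS e '' {S | q + 1 ≤ S.card} = ⇑(yB e) '' {S | q + 1 ≤ S.card} :=
    Set.image_congr fun S _ => (yB_apply e S).symm
  rw [himg, Module.Basis.mem_span_image] at hzN
  -- compute the coordinate of z at i.1
  have hrepr : (yB e).repr z i.1 = g i := by
    rw [hz, map_sum]
    rw [show ((∑ S ∈ t, (yB e).repr (g S • yS e S.1)) i.1)
        = ∑ S ∈ t, ((yB e).repr (g S • yS e S.1)) i.1 from Finsupp.finset_sum_apply t _ i.1]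
    have : ∀ S ∈ t, ((yB e).repr (g S • yS e S.1)) i.1
        = if S = i then g S else 0 := by
      intro S _
      rw [map_smul, repr_yS, Finsupp.smul_apply, Finsupp.single_apply]
      by_cases h : S = i
      · rw [if_pos (by rw [h]), if_pos h, smul_eq_mul, mul_one]
      · rw [if_neg (fun hc => h (Subtype.ext hc)), if_neg h, smul_zero]
    rw [Finset.sum_congr rfl this, Finset.sum_ite_eq' t i g, if_pos hi]
  by_contra hg
  have : i.1 ∈ ((yB e).repr z).support := by
    rw [Finsupp.mem_support_iff, hrepr]; exact hg
  have := hzN this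
  simp only [Set.mem_setOf_eq] at this
  omega

end PsiAux

namespace PsiAux
set_option linter.unusedSectionVars false
variable {V : Type*} [AddCommGroup V] [Module (ZMod 2) V] {n : ℕ} (e : Module.Basis (Fin n) (ZMod 2) V)

/-- the family of exterior products of basis vectors indexed by subsets of cardinality `q` -/
noncomputable def wFam (q : ℕ) (S : {S : Finset (Fin n) // S.card = q}) :
    ExteriorAlgebra (ZMod 2) V :=
  ExteriorAlgebra.ιMulti (ZMod 2) q fun i => e ((S.1.orderIsoOfFin S.2) i)

lemma extPow_le_span (q : ℕ) :
    (⋀[ZMod 2]^q V) ≤ Submodule.span (ZMod 2) (Set.range (wFam e q)) := by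
  rw [← ExteriorAlgebra.ιMulti_span_fixedDegree, Submodule.span_le]
  rintro _ ⟨v, rfl⟩
  classical
  set c : Fin q → Fin n → ZMod 2 := fun i j => e.repr (v i) j with hc
  have h1 : v = fun i => ∑ j ∈ Finset.univ, c i j • e j := by
    funext i
    rw [hc]
    exact (e.sum_repr (v i)).symm
  have hv : ExteriorAlgebra.ιMulti (ZMod 2) q v
      = ∑ r ∈ Fintype.piFinset (fun _ : Fin q => (Finset.univ : Finset (Fin n))),
          (∏ i, c i (r i)) • ExteriorAlgebra.ιMulti (ZMod 2) q (fun i => e (r i)) := by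
    conv_lhs => rw [h1]
    rw [show (ExteriorAlgebra.ιMulti (ZMod 2) q (M := V))
        (fun i => ∑ j ∈ Finset.univ, c i j • e j)
      = (ExteriorAlgebra.ιMulti (ZMod 2) q (M := V)).toMultilinearMap
        (fun i => ∑ j ∈ Finset.univ, c i j • e j) from rfl]
    rw [MultilinearMap.map_sum_finset]
    refine Finset.sum_congr rfl fun r _ => ?_
    exact MultilinearMap.map_smul_univ _ (fun i => c i (r i)) (fun i => e (r i))
  rw [hv]
  refine Submodule.sum_mem _ fun r _ => Submodule.smul_mem _ _ ?_
  by_cases hr : Function.Injective r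
  · set S : Finset (Fin n) := Finset.image r Finset.univ with hS
    have hcard : S.card = q := by
      rw [hS, Finset.card_image_of_injective _ hr, Finset.card_univ, Fintype.card_fin]
    set σ : Fin q → Fin q := fun i => (S.orderIsoOfFin hcard).symm
      ⟨r i, by rw [hS]; exact Finset.mem_image_of_mem r (Finset.mem_univ i)⟩ with hσ
    have hσinj : Function.Injective σ := by
      intro a b hab
      apply hr
      have := congrArg (fun x => ((S.orderIsoOfFin hcard) x : Fin n)) hab
      simpa [hσ] using this
    have hσbij : Function.Bijective σ := (Finite.injective_iff_bijective).1 hσinj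
    set π : Equiv.Perm (Fin q) := Equiv.ofBijective σ hσbij with hπ
    have key : (fun i => e ((S.orderIsoOfFin hcard) i)) ∘ π = fun i => e (r i) := by
      funext i
      show e ((S.orderIsoOfFin hcard) (σ i)) = e (r i)
      rw [hσ]
      simp
    have hperm := (ExteriorAlgebra.ιMulti (ZMod 2) q (M := V)).map_perm
      (fun i => e ((S.orderIsoOfFin hcard) i)) π
    rw [key] at hperm
    rw [hperm]
    have hmem : ExteriorAlgebra.ιMulti (ZMod 2) q
        (fun i => e ((S.orderIsoOfFin hcard) i)) ∈
        Submodule.span (ZMod 2) (Set.range (wFam e q)) :=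
      Submodule.subset_span ⟨⟨S, hcard⟩, rfl⟩
    rcases Int.units_eq_one_or (Equiv.Perm.sign π) with h | h <;> rw [h]
    · rwa [one_smul]
    · rw [Units.smul_def, Units.val_neg, Units.val_one, neg_one_zsmul]
      exact Submodule.neg_mem _ hmem
  · have : ¬ Function.Injective (fun i => e (r i)) := by
      intro hinj
      exact hr (Function.Injective.of_comp (f := e) hinj)
    rw [AlternatingMap.map_eq_zero_of_not_injective _ _ this]
    exact Submodule.zero_mem _

end PsiAux

namespace PsiAux
set_option linter.unusedSectionVars false
variable {V : Type*} [AddCommGroup V] [Module (ZMod 2) V] {n : ℕ} (e : Module.Basis (Fin n) (ZMod 2) V)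
variable (q : ℕ)


lemma yS_eq_prod (S : Finset (Fin n)) (h : S.card = q) :
    yS e S = ∏ i : Fin q, xv (e ((S.orderIsoOfFin h) i)) := by
  rw [yS, ← Finset.prod_coe_sort S (fun k => xv (e k))]
  exact Fintype.prod_equiv (S.orderIsoOfFin h).toEquiv.symm (fun i => xv (e i))
    (fun j => xv (e ((S.orderIsoOfFin h) j))) (fun i => by simp)

lemma range_psiQ_eq (e : Module.Basis (Fin n) (ZMod 2) V) :
    LinearMap.range (psiQ (V := V) q) =
      Submodule.map (NN (V := V) q).mkQ
        (Submodule.restrictScalars (ZMod 2) (augIdeal V ^ q)) := by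
  rw [psi_range q (psiQ q) _ (psiQ_spec q)]
  apply le_antisymm
  · rw [Submodule.span_le]
    rintro _ ⟨v, rfl⟩
    have hmem : ∏ i, xv (v i) ∈ augIdeal V ^ q := by
      have := prod_mem_pow Finset.univ (fun i => xv (v i)) (fun i _ => xv_mem (v i))
      rwa [Finset.card_univ, Fintype.card_fin] at this
    exact ⟨∏ i, xv (v i), hmem, rfl⟩
  · rw [Ipow e q, Submodule.map_span, Submodule.span_le]
    rintro _ ⟨_, ⟨S, hS, rfl⟩, rfl⟩
    simp only [Set.mem_setOf_eq] at hS
    rcases eq_or_lt_of_le hS with heq | hlt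
    · apply Submodule.subset_span
      refine ⟨fun i => e ((S.orderIsoOfFin heq.symm) i), ?_⟩
      rw [Submodule.mkQ_apply, yS_eq_prod e q S heq.symm]
    · have h0 : (NN (V := V) q).mkQ (yS e S) = 0 := by
        rw [Submodule.mkQ_apply, mk_yS_eq_zero e q hlt]
      rw [h0]
      exact Submodule.zero_mem _

lemma mapQ_eq (e : Module.Basis (Fin n) (ZMod 2) V) : Submodule.map (NN (V := V) q).mkQ
      (Submodule.restrictScalars (ZMod 2) (augIdeal V ^ q)) =
    Submodule.span (ZMod 2) (Set.range
      (fun S : {S : Finset (Fin n) // S.card = q} =>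
        (Submodule.Quotient.mk (yS e S.1) : AddMonoidAlgebra (ZMod 2) V ⧸ NN (V := V) q))) := by
  rw [Ipow e q, Submodule.map_span]
  apply le_antisymm
  · rw [Submodule.span_le]
    rintro _ ⟨_, ⟨S, hS, rfl⟩, rfl⟩
    simp only [Set.mem_setOf_eq] at hS
    rcases eq_or_lt_of_le hS with heq | hlt
    · exact Submodule.subset_span ⟨⟨S, heq.symm⟩, rfl⟩
    · have h0 : (NN (V := V) q).mkQ (yS e S) = 0 := by
        rw [Submodule.mkQ_apply, mk_yS_eq_zero e q hlt]
      rw [h0]; exact Submodule.zero_mem _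
  · rw [Submodule.span_le]
    rintro _ ⟨S, rfl⟩
    exact Submodule.subset_span ⟨yS e S.1, ⟨S.1, le_of_eq S.2.symm, rfl⟩, rfl⟩

lemma psiQ_injective (e : Module.Basis (Fin n) (ZMod 2) V) : Function.Injective (psiQ (V := V) q) := by
  classical
  have hfd : FiniteDimensional (ZMod 2) (Submodule.span (ZMod 2) (Set.range (wFam e q))) :=
    FiniteDimensional.span_of_finite _ (Set.finite_range _)
  have hfd2 : FiniteDimensional (ZMod 2) (⋀[ZMod 2]^q V) :=
    Submodule.finiteDimensional_of_le (extPow_le_span e q)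
  -- rank bound on exterior power
  have h1 : Module.finrank (ZMod 2) (⋀[ZMod 2]^q V)
      ≤ Fintype.card {S : Finset (Fin n) // S.card = q} := by
    refine le_trans (Submodule.finrank_mono (extPow_le_span e q)) ?_
    refine le_trans (finrank_span_le_card _) ?_
    rw [Set.toFinset_range]
    exact le_trans (Finset.card_image_le) (by rw [Finset.card_univ])
  -- rank of the range
  have h2 : Module.finrank (ZMod 2) (LinearMap.range (psiQ (V := V) q))
      = Fintype.card {S : Finset (Fin n) // S.card = q} := by
    rw [range_psiQ_eq q e, mapQ_eq q e]
    exact finrank_span_eq_card (mkq_yS_indep e q)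
  have h3 := LinearMap.finrank_range_add_finrank_ker (psiQ (V := V) q)
  have h4 : Module.finrank (ZMod 2) (LinearMap.ker (psiQ (V := V) q)) = 0 := by omega
  rw [← LinearMap.ker_eq_bot]
  set_option synthInstance.maxHeartbeats 1000000 in
  exact Submodule.finrank_eq_zero.1 h4

end PsiAux

/-- for each `q ≥ 0` there is a unique `𝔽₂`-linear map
`ψ_q : ⋀^q V → I^q/I^{q+1}` sending each decomposable `v₁ ∧ ⋯ ∧ v_q` to the class of
`([0]+[v₁])⋯([0]+[v_q])` modulo `I^{q+1}`, and `ψ_q` is an isomorphism of `𝔽₂`-vector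
spaces.  Here `I^q/I^{q+1}` is realised as the image of `I^q` in `𝔽₂[V]/I^{q+1}`;
a map into `𝔽₂[V]/I^{q+1}` is an isomorphism onto `I^q/I^{q+1}` iff it is injective
with range the image of `I^q`. -/
theorem existsUnique_psi_and_iso {V : Type*} [AddCommGroup V] [Module (ZMod 2) V]
    [Module.Finite (ZMod 2) V] (q : ℕ) :
    (∃! ψ : (⋀[ZMod 2]^q V) →ₗ[ZMod 2]
        (AddMonoidAlgebra (ZMod 2) V ⧸
          Submodule.restrictScalars (ZMod 2) (augIdeal V ^ (q + 1))),
      ∀ v : Fin q → V,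
        ψ ⟨ExteriorAlgebra.ιMulti (ZMod 2) q v,
            ExteriorAlgebra.ιMulti_range (ZMod 2) q (Set.mem_range_self v)⟩ =
          Submodule.Quotient.mk (∏ i : Fin q, (ga (0 : V) + ga (v i)))) ∧
    (∀ ψ : (⋀[ZMod 2]^q V) →ₗ[ZMod 2]
        (AddMonoidAlgebra (ZMod 2) V ⧸
          Submodule.restrictScalars (ZMod 2) (augIdeal V ^ (q + 1))),
      (∀ v : Fin q → V,
        ψ ⟨ExteriorAlgebra.ιMulti (ZMod 2) q v,
            ExteriorAlgebra.ιMulti_range (ZMod 2) q (Set.mem_range_self v)⟩ =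
          Submodule.Quotient.mk (∏ i : Fin q, (ga (0 : V) + ga (v i)))) →
      Function.Injective ψ ∧
        LinearMap.range ψ =
          Submodule.map
            (Submodule.restrictScalars (ZMod 2) (augIdeal V ^ (q + 1))).mkQ
            (Submodule.restrictScalars (ZMod 2) (augIdeal V ^ q))) := by
  classical
  have e : Module.Basis (Fin (Module.finrank (ZMod 2) V)) (ZMod 2) V := Module.finBasis (ZMod 2) V
  constructor
  · refine ⟨PsiAux.psiQ q, fun v => PsiAux.psiQ_spec q v, fun g hg => ?_⟩
    exact PsiAux.psi_ext q g (PsiAux.psiQ q)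
      (fun v => (hg v).trans (PsiAux.psiQ_spec q v).symm)
  · intro ψ hψ
    have hψeq : ψ = PsiAux.psiQ q :=
      PsiAux.psi_ext q ψ _ (fun v => (hψ v).trans (PsiAux.psiQ_spec q v).symm)
    rw [hψeq]
    exact ⟨PsiAux.psiQ_injective q e, PsiAux.range_psiQ_eq q e⟩
end
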